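/- There exists a constant C ≥ 0, depending only on m, ω, k₀,…,k_m, l₀,…,l_m, l_J, m₀,…,m_m, m_J and I₀ (and not on p, ε, φ, T₁, T₂, t), with the following property. Let p ≥ 1 be an integer, ε ∈ (0, ω/4), φ ∈ Ω, and T₁ < T₂ be reals such that: (i) for every i ∈ ℤ with θ_i ≥ T₁, |θ_{i+p} − θ_i − p·ω| < ε and ‖φ(θ_{i+p}) − φ(θ_i)‖ < ε; (ii) for every s ≥ T₁ such that θ_i + ε < s < θ_{i+1} − ε for some i ∈ ℤ, one has θ_{i+p} < s + pω < θ_{i+p+1} and ‖φ(s + pω) − φ(s)‖ < ε; (iii) 2e^{−k₀(T₂−T₁)}·(m₀/k₀ + (I₀ + m_J)·e^{k₀ω}/(1 − e^{−k₀ω})) < ε and 4e^{−k_j(T₂−T₁)}·m_j/k_j < ε for j = 1,…,m. Then for every t ≥ T₂ with θ_i + ε < t < θ_{i+1} − ε for some i ∈ ℤ, one has ‖(Tφ)(t + pω) − (Tφ)(t)‖ ≤ C·ε. (This is the key estimate in the proof of assertion 2 of Theorem 1, on eventually pω-periodic solutions.) -/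

import Mathlib

/-- The Euclidean norm on `Fin n → ℝ`. -/
noncomputable def eNorm {n : ℕ} (v : Fin n → ℝ) : ℝ := Real.sqrt (∑ j, v j ^ 2)

/-- The operator `T` of the paper: coordinate `0` (the systemic arterial pressure) gets
`(Tφ)₀(t) = −∫_{−∞}^t e^{−k₀(t−s)} g₀(φ₀(s)−φ₁(s),…,φ₀(s)−φ_m(s)) ds
  + Σ_{θ_i < t} e^{−k₀(t−θ_i)} (I₀ + J₀(φ₀(θ_i)))`,
and the compartment coordinates `j = 1,…,m` (nonzero indices of `Fin (m+1)`) get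
`(Tφ)_j(t) = ∫_{−∞}^t e^{−k_j(t−s)} g_j(φ₀(s)−φ_j(s)) ds`. -/
noncomputable def Tmap (m : ℕ) (θ : ℤ → ℝ) (k : Fin (m + 1) → ℝ) (I₀ : ℝ)
    (g₀ : (Fin m → ℝ) → ℝ) (g : Fin (m + 1) → ℝ → ℝ) (J₀ : ℝ → ℝ)
    (φ : ℝ → Fin (m + 1) → ℝ) : ℝ → Fin (m + 1) → ℝ := fun t j =>
  if j = 0 then
    -(∫ s in Set.Iic t, Real.exp (-(k 0) * (t - s)) * g₀ (fun i => φ s 0 - φ s i.succ))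
      + ∑' i : ℤ, (if θ i < t then Real.exp (-(k 0) * (t - θ i)) * (I₀ + J₀ (φ (θ i) 0)) else 0)
  else
    ∫ s in Set.Iic t, Real.exp (-(k j) * (t - s)) * g j (φ s 0 - φ s j)

/-- The set `Ω`: bounded measurable functions `φ : ℝ → ℝ^{m+1}` with
`|φ₀(t)| ≤ m₀/k₀ + (I₀ + m_J)·e^{k₀ω}/(1 − e^{−k₀ω})` and `|φ_j(t)| ≤ m_j/k_j`. -/
def OmegaSet (m : ℕ) (ω : ℝ) (k mc : Fin (m + 1) → ℝ) (I₀ mJ : ℝ) :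
    Set (ℝ → Fin (m + 1) → ℝ) :=
  {φ | Measurable φ ∧ (∃ B, ∀ t, eNorm (φ t) ≤ B) ∧ ∀ t,
    |φ t 0| ≤ mc 0 / k 0 + (I₀ + mJ) * Real.exp (k 0 * ω) / (1 - Real.exp (-(k 0) * ω)) ∧
    ∀ j, j ≠ 0 → |φ t j| ≤ mc j / k j}

open MeasureTheory Set Real

lemma expabs (x : ℝ) : |Real.exp x - 1| ≤ |x| * Real.exp |x| := by
  have h2 : Real.exp (-x) * Real.exp x = 1 := by rw [← Real.exp_add]; simp
  rcases le_or_gt 0 x with h | h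
  · rw [abs_of_nonneg h, abs_of_nonneg (by nlinarith [Real.add_one_le_exp x] : (0:ℝ) ≤ Real.exp x - 1)]
    nlinarith [Real.add_one_le_exp (-x), Real.exp_pos x]
  · have h3 : Real.exp x ≤ 1 := by rw [← Real.exp_zero]; exact Real.exp_le_exp.2 h.le
    rw [abs_of_neg h, abs_of_nonpos (by linarith : Real.exp x - 1 ≤ 0)]
    nlinarith [Real.add_one_le_exp x, Real.one_le_exp (le_of_lt (neg_pos.2 h)), Real.exp_pos (-x)]

lemma eNorm_le_sum {n : ℕ} (v : Fin n → ℝ) : eNorm v ≤ ∑ j, |v j| := by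
  rw [eNorm, show (∑ j, |v j|) = Real.sqrt ((∑ j, |v j|)^2) by rw [Real.sqrt_sq (by positivity)]]
  apply Real.sqrt_le_sqrt
  calc ∑ j, v j ^2 = ∑ j, |v j| ^2 := by simp [sq_abs]
    _ ≤ ∑ j, |v j| * ∑ j', |v j'| := Finset.sum_le_sum fun j _ => by
        rw [sq]
        exact mul_le_mul_of_nonneg_left (Finset.single_le_sum (f := fun j' => |v j'|)
          (fun j' _ => abs_nonneg _) (Finset.mem_univ j)) (abs_nonneg _)
    _ = (∑ j, |v j|)^2 := by rw [← Finset.sum_mul, sq]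

lemma abs_le_eNorm {n : ℕ} (v : Fin n → ℝ) (j : Fin n) : |v j| ≤ eNorm v := by
  rw [eNorm, show |v j| = Real.sqrt (v j ^2) by rw [Real.sqrt_sq_eq_abs]]
  exact Real.sqrt_le_sqrt (Finset.single_le_sum (fun i _ => sq_nonneg (v i)) (Finset.mem_univ j))


section Helpers

lemma geomZ (ω k : ℝ) (hω : 0 < ω) (hk : 0 < k) (θ : ℤ → ℝ)
    (hθ : ∀ i : ℤ, (i:ℝ) * ω ≤ θ i ∧ θ i < ((i:ℝ)+1) * ω) (a t A : ℝ) (hA : 0 ≤ A)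
    (u : ℤ → ℝ)
    (hu0 : ∀ i, 0 ≤ u i) (hu : ∀ i, u i ≤ (if θ i ≤ a then A * Real.exp (-k*(t-θ i)) else 0)) :
    Summable u ∧ ∑' i, u i ≤ A * (Real.exp (-k*(t-a)) * (Real.exp (k*ω) / (1-Real.exp (-(k*ω))))) := by
  set N : ℤ := ⌊a/ω⌋ with hN
  have hiN : ∀ i : ℤ, θ i ≤ a → i ≤ N := by
    intro i hi
    exact Int.le_floor.2 ((le_div_iff₀ hω).2 ((hθ i).1.trans hi))
  set e : ℕ → ℤ := fun n => N - n with he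
  have hinj : Function.Injective e := by intro n m h; simpa [he] using h
  have hrange : ∀ i : ℤ, i ∉ Set.range e → u i = 0 := by
    intro i hi
    have hna : ¬ (θ i ≤ a) := by
      intro hle
      exact hi ⟨(N - i).toNat, by simp [he, Int.toNat_of_nonneg (by linarith [hiN i hle] : (0:ℤ) ≤ N - i)]⟩
    have h' := hu i
    rw [if_neg hna] at h'
    exact le_antisymm h' (hu0 i)
  set r : ℝ := Real.exp (-(k*ω)) with hr
  have hr0 : 0 ≤ r := Real.exp_nonneg _
  have hr1 : r < 1 := Real.exp_lt_one_iff.2 (by nlinarith)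
  set c : ℝ := A * Real.exp (-k*(t-a-ω)) with hc
  have hdom : ∀ n : ℕ, u (e n) ≤ c * r ^ n := by
    intro n
    rcases le_or_gt (θ (e n)) a with h | h
    · have h1 : θ (e n) < ((e n : ℝ)+1) * ω := (hθ (e n)).2
      have h2 : ((N:ℝ)) * ω ≤ a := by
        have := Int.floor_le (a/ω)
        calc ((N:ℝ)) * ω ≤ (a/ω) * ω := by nlinarith
          _ = a := div_mul_cancel₀ _ (ne_of_gt hω)
      have h3 : θ (e n) ≤ a + ω - n * ω := by
        have : ((e n : ℝ)) = (N:ℝ) - n := by simp [he]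
        nlinarith [h1]
      calc u (e n) ≤ A * Real.exp (-k*(t-θ (e n))) := by simpa [if_pos h] using hu (e n)
        _ ≤ c * r ^ n := by
            rw [hc, hr, ← Real.exp_nat_mul, mul_assoc, ← Real.exp_add]
            apply mul_le_mul_of_nonneg_left _ hA
            apply Real.exp_le_exp.2
            nlinarith [h3]
    · have : u (e n) = 0 := by
        have h' := hu (e n)
        rw [if_neg (not_le.2 h)] at h'
        exact le_antisymm h' (hu0 _)
      rw [this]
      have : 0 ≤ c := by positivity
      positivity
  have hgs : Summable (fun n : ℕ => c * r ^ n) := (summable_geometric_of_lt_one hr0 hr1).mul_left c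
  have hsum_e : Summable (u ∘ e) := Summable.of_nonneg_of_le (fun n => hu0 _) hdom hgs
  have hsupp : Function.support u ⊆ Set.range e := by
    intro i hi
    by_contra hni
    exact hi (hrange i hni)
  have hsum : Summable u := (hinj.summable_iff hrange).1 hsum_e
  refine ⟨hsum, ?_⟩
  have h1 : ∑' i, u i = ∑' n, u (e n) := (hinj.tsum_eq hsupp).symm
  have h2 : ∑' n, u (e n) ≤ ∑' n, c * r ^ n := Summable.tsum_le_tsum hdom hsum_e hgs
  have h3 : ∑' n, c * r ^ n = c * (1 - r)⁻¹ := by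
    rw [tsum_mul_left, tsum_geometric_of_lt_one hr0 hr1]
  have h4 : c = A * (Real.exp (-k*(t-a)) * Real.exp (k*ω)) := by
    rw [hc, ← Real.exp_add]; ring_nf
  rw [h1]
  calc ∑' n, u (e n) ≤ c * (1-r)⁻¹ := h2.trans (le_of_eq h3)
    _ = A * (Real.exp (-k*(t-a)) * (Real.exp (k*ω) / (1-r))) := by rw [h4]; ring

lemma shiftIic (f : ℝ → ℝ) (t c : ℝ) :
    ∫ s in Set.Iic (t+c), f s = ∫ s in Set.Iic t, f (s+c) := by
  rw [← integral_indicator measurableSet_Iic, ← integral_indicator measurableSet_Iic,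
    ← integral_add_right_eq_self (fun x => (Set.Iic (t+c)).indicator f x) c]
  congr 1
  ext x
  by_cases h : x ≤ t
  · rw [Set.indicator_of_mem (by simpa using h : x + c ∈ Set.Iic (t+c)),
      Set.indicator_of_mem (by simpa using h)]
  · rw [Set.indicator_of_notMem (by simpa using h), Set.indicator_of_notMem (by simpa using h)]

lemma expIntOn (k t : ℝ) (hk : 0 < k) :
    IntegrableOn (fun s => Real.exp (-k * (t - s))) (Set.Iic t) := by
  have h0 : Integrable ((Set.Iic (k*t)).indicator Real.exp) :=
    (integrable_indicator_iff measurableSet_Iic).2 (integrableOn_exp_Iic (k*t))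
  have h := (integrable_comp_mul_left_iff ((Set.Iic (k*t)).indicator Real.exp) (ne_of_gt hk)).2 h0
  have heq : (fun x => (Set.Iic (k*t)).indicator Real.exp (k * x))
      = (Set.Iic t).indicator (fun s => Real.exp (k*s)) := by
    ext x
    rw [← Set.indicator_comp_right (k * ·) (g := Real.exp), Set.preimage_const_mul_Iic₀ _ hk,
      mul_div_assoc, mul_div_cancel₀ _ (ne_of_gt hk)]
    rfl
  rw [heq] at h
  have h2 : IntegrableOn (fun s => Real.exp (k*s)) (Set.Iic t) :=
    (integrable_indicator_iff measurableSet_Iic).1 h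
  have h3 : (fun s => Real.exp (-k * (t - s))) = fun s => Real.exp (-(k*t)) * Real.exp (k*s) := by
    ext s; rw [← Real.exp_add]; ring_nf
  rw [h3]
  exact h2.const_mul _

lemma expIntVal (k t : ℝ) (hk : 0 < k) :
    ∫ s in Set.Iic t, Real.exp (-k * (t - s)) = 1/k := by
  have heq : (fun x => (Set.Iic (k*t)).indicator Real.exp (k * x))
      = (Set.Iic t).indicator (fun s => Real.exp (k*s)) := by
    ext x
    rw [← Set.indicator_comp_right (k * ·) (g := Real.exp), Set.preimage_const_mul_Iic₀ _ hk,
      mul_div_assoc, mul_div_cancel₀ _ (ne_of_gt hk)]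
    rfl
  have h1 : ∫ s in Set.Iic t, Real.exp (k*s) = k⁻¹ * Real.exp (k*t) := by
    rw [← integral_indicator measurableSet_Iic, ← heq,
      Measure.integral_comp_mul_left ((Set.Iic (k*t)).indicator Real.exp) k,
      integral_indicator measurableSet_Iic, integral_exp_Iic, abs_of_pos (inv_pos.2 hk),
      smul_eq_mul]
  have h3 : (fun s => Real.exp (-k * (t - s))) = fun s => Real.exp (-(k*t)) * Real.exp (k*s) := by
    ext s; rw [← Real.exp_add]; ring_nf
  rw [h3, integral_const_mul, h1,
    show Real.exp (-(k*t)) * (k⁻¹ * Real.exp (k*t)) = (Real.exp (-(k*t)) * Real.exp (k*t)) * k⁻¹ by ring,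
    ← Real.exp_add]
  simp [one_div]

lemma prodIntOn (k t M : ℝ) (hk : 0 < k) (G : ℝ → ℝ) (hGm : Measurable G)
    (hGb : ∀ s, |G s| ≤ M) :
    IntegrableOn (fun s => Real.exp (-k * (t - s)) * G s) (Set.Iic t) := by
  apply Integrable.mono' ((expIntOn k t hk).const_mul M)
  · exact ((Real.measurable_exp.comp (by fun_prop)).mul hGm).aestronglyMeasurable
  · refine Filter.Eventually.of_forall fun s => ?_
    rw [Real.norm_eq_abs, abs_mul, abs_of_pos (Real.exp_pos _)]
    calc Real.exp (-k*(t-s)) * |G s| ≤ Real.exp (-k*(t-s)) * M :=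
        mul_le_mul_of_nonneg_left (hGb s) (Real.exp_pos _).le
      _ = M * Real.exp (-k*(t-s)) := mul_comm _ _

end Helpers

section Main

lemma badCover (ω ε : ℝ) (hω : 0 < ω) (hε : 0 < ε) (θ : ℤ → ℝ)
    (hθ : ∀ i : ℤ, (i:ℝ) * ω ≤ θ i ∧ θ i < ((i:ℝ)+1) * ω) (s : ℝ)
    (hbad : ¬ ∃ i : ℤ, θ i + ε < s ∧ s < θ (i+1) - ε) : ∃ i : ℤ, |s - θ i| ≤ ε := by
  obtain ⟨i₀, hP, hmax⟩ := Int.exists_greatest_of_bdd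
    (P := fun i => θ i ≤ s)
    ⟨⌊s/ω⌋, fun z hz => Int.le_floor.2 ((le_div_iff₀ hω).2 ((hθ z).1.trans hz))⟩
    ⟨⌊s/ω⌋ - 1, by
      have h1 := (hθ (⌊s/ω⌋ - 1)).2
      have h2 : (⌊s/ω⌋ : ℝ) * ω ≤ s := by
        have := Int.floor_le (s/ω)
        calc (⌊s/ω⌋ : ℝ) * ω ≤ (s/ω) * ω := by nlinarith
          _ = s := div_mul_cancel₀ _ (ne_of_gt hω)
      push_cast at h1 ⊢
      nlinarith⟩
  have hnext : s < θ (i₀ + 1) := by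
    by_contra h
    have := hmax (i₀ + 1) (not_lt.1 h)
    omega
  rcases not_and_or.1 (fun hcon => hbad ⟨i₀, hcon⟩) with h | h
  · exact ⟨i₀, abs_le.2 ⟨by linarith [hP], by linarith [not_lt.1 h]⟩⟩
  · exact ⟨i₀ + 1, abs_le.2 ⟨by linarith [not_lt.1 h], by linarith [hnext]⟩⟩

set_option maxHeartbeats 1000000 in
lemma intest (ω k ε M L T₁ T₂ t c : ℝ) (θ : ℤ → ℝ)
    (hθ : ∀ i : ℤ, (i:ℝ) * ω ≤ θ i ∧ θ i < ((i:ℝ)+1) * ω)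
    (hω : 0 < ω) (hk : 0 < k) (hM : 0 ≤ M) (hL : 0 ≤ L) (hε : 0 < ε) (hεω : ε < ω)
    (ht12 : T₁ < T₂) (ht : T₂ ≤ t)
    (G : ℝ → ℝ) (hGm : Measurable G) (hGb : ∀ s, |G s| ≤ M)
    (hgood : ∀ s, T₁ ≤ s → (∃ i : ℤ, θ i + ε < s ∧ s < θ (i+1) - ε) → |G (s+c) - G s| ≤ L * ε)
    (htail : 2 * M * Real.exp (-k*(T₂-T₁)) / k ≤ ε) :
    |(∫ s in Set.Iic (t+c), Real.exp (-k*(t+c-s)) * G s)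
        - ∫ s in Set.Iic t, Real.exp (-k*(t-s)) * G s|
      ≤ (1 + L/k + 4*M*Real.exp (4*(k*ω)) / (1 - Real.exp (-(k*ω)))) * ε := by
  have hden : 0 < 1 - Real.exp (-(k*ω)) := by
    have : Real.exp (-(k*ω)) < 1 := Real.exp_lt_one_iff.2 (by nlinarith)
    linarith
  have hA : (∫ s in Set.Iic (t+c), Real.exp (-k*(t+c-s)) * G s)
      = ∫ s in Set.Iic t, Real.exp (-k*(t-s)) * G (s+c) := by
    rw [shiftIic (fun s => Real.exp (-k*(t+c-s)) * G s) t c]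
    congr 1
    ext s
    congr 2
    ring
  have hG2m : Measurable (fun s => G (s+c)) := hGm.comp (measurable_add_const c)
  have I1 : IntegrableOn (fun s => Real.exp (-k*(t-s)) * G (s+c)) (Set.Iic t) :=
    prodIntOn k t M hk _ hG2m (fun s => hGb _)
  have I2 : IntegrableOn (fun s => Real.exp (-k*(t-s)) * G s) (Set.Iic t) :=
    prodIntOn k t M hk G hGm hGb
  rw [hA, ← integral_sub I1 I2]
  set FD : ℝ → ℝ := fun s => Real.exp (-k*(t-s)) * |G (s+c) - G s| with hFD
  have hFDeq : ∀ s : ℝ, |Real.exp (-k*(t-s)) * G (s+c) - Real.exp (-k*(t-s)) * G s| = FD s := by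
    intro s
    rw [← mul_sub, abs_mul, abs_of_pos (Real.exp_pos _)]
  have IFD : IntegrableOn FD (Set.Iic t) := by
    apply ((I1.sub I2).abs).congr
    exact Filter.Eventually.of_forall hFDeq
  have habs : |∫ s in Set.Iic t, (Real.exp (-k*(t-s)) * G (s+c) - Real.exp (-k*(t-s)) * G s)|
      ≤ ∫ s in Set.Iic t, FD s := by
    calc |∫ s in Set.Iic t, (Real.exp (-k*(t-s)) * G (s+c) - Real.exp (-k*(t-s)) * G s)|
        ≤ ∫ s in Set.Iic t, |Real.exp (-k*(t-s)) * G (s+c) - Real.exp (-k*(t-s)) * G s| := by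
          simpa [Real.norm_eq_abs] using
            norm_integral_le_integral_norm (μ := volume.restrict (Set.Iic t))
              (f := fun s => Real.exp (-k*(t-s)) * G (s+c) - Real.exp (-k*(t-s)) * G s)
      _ = ∫ s in Set.Iic t, FD s := by
          exact integral_congr_ae (Filter.Eventually.of_forall hFDeq)
  refine habs.trans ?_
  have hT1t : T₁ ≤ t := le_trans ht12.le ht
  have hsplit : Set.Iic t = Set.Iic T₁ ∪ Set.Ioc T₁ t := (Set.Iic_union_Ioc_eq_Iic hT1t).symm
  have hdecomp : ∫ s in Set.Iic t, FD s
      = (∫ s in Set.Iic T₁, FD s) + ∫ s in Set.Ioc T₁ t, FD s := by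
    rw [hsplit]
    exact setIntegral_union (Set.Iic_disjoint_Ioc le_rfl) measurableSet_Ioc
      (IFD.mono_set (by rw [hsplit]; exact Set.subset_union_left))
      (IFD.mono_set (by rw [hsplit]; exact Set.subset_union_right))
  rw [hdecomp]
  -- Part 1 : tail
  have hpart1 : ∫ s in Set.Iic T₁, FD s ≤ ε := by
    have hb : ∀ s ∈ Set.Iic T₁, FD s ≤ 2*M*Real.exp (-k*(t-s)) := by
      intro s _
      have h1 : |G (s+c) - G s| ≤ 2*M := by
        calc |G (s+c) - G s| ≤ |G (s+c)| + |G s| := abs_sub _ _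
          _ ≤ 2*M := by linarith [hGb (s+c), hGb s]
      calc FD s ≤ Real.exp (-k*(t-s)) * (2*M) :=
          mul_le_mul_of_nonneg_left h1 (Real.exp_pos _).le
        _ = 2*M*Real.exp (-k*(t-s)) := by ring
    have hmono : ∫ s in Set.Iic T₁, FD s ≤ ∫ s in Set.Iic T₁, 2*M*Real.exp (-k*(t-s)) :=
      setIntegral_mono_on (IFD.mono_set (Set.Iic_subset_Iic.2 hT1t))
        (IntegrableOn.mono_set ((expIntOn k t hk).const_mul (2*M)) (Set.Iic_subset_Iic.2 hT1t))
        measurableSet_Iic hb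
    have hval : ∫ s in Set.Iic T₁, 2*M*Real.exp (-k*(t-s))
        = 2*M*(Real.exp (-k*(t-T₁)) * (1/k)) := by
      rw [MeasureTheory.integral_const_mul]
      congr 1
      have : ∀ s : ℝ, Real.exp (-k*(t-s)) = Real.exp (-k*(t-T₁)) * Real.exp (-k*(T₁-s)) := by
        intro s; rw [← Real.exp_add]; ring_nf
      rw [MeasureTheory.setIntegral_congr_fun measurableSet_Iic (fun s _ => this s),
        MeasureTheory.integral_const_mul, expIntVal k T₁ hk]
    have hexp : Real.exp (-k*(t-T₁)) ≤ Real.exp (-k*(T₂-T₁)) :=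
      Real.exp_le_exp.2 (by nlinarith)
    have hk' : 0 < 1/k := by positivity
    calc ∫ s in Set.Iic T₁, FD s ≤ 2*M*(Real.exp (-k*(t-T₁)) * (1/k)) := hmono.trans hval.le
      _ ≤ 2*M*Real.exp (-k*(T₂-T₁))/k := by
          have h0 : 0 ≤ 2*M*(1/k) := by positivity
          calc 2*M*(Real.exp (-k*(t-T₁)) * (1/k)) = (2*M*(1/k)) * Real.exp (-k*(t-T₁)) := by ring
            _ ≤ (2*M*(1/k)) * Real.exp (-k*(T₂-T₁)) := mul_le_mul_of_nonneg_left hexp h0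
            _ = 2*M*Real.exp (-k*(T₂-T₁))/k := by ring
      _ ≤ ε := htail
  -- Part 2
  set I : Finset ℤ := Finset.Icc (⌈(T₁-ε)/ω⌉ - 1) ⌊(t+ε)/ω⌋ with hIdef
  set Φ : ℝ → ℝ := fun s => L*ε*Real.exp (-k*(t-s))
      + ∑ i ∈ I, Set.indicator (Set.Icc (θ i - ε) (θ i + ε))
          (fun s' => 2*M*Real.exp (-k*(t-s'))) s with hΦdef
  have hΦint : IntegrableOn Φ (Set.Iic t) := by
    apply Integrable.add
    · exact (expIntOn k t hk).const_mul _
    · apply integrable_finset_sum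
      intro i _
      exact ((expIntOn k t hk).const_mul (2*M)).indicator measurableSet_Icc
  have hΦ0 : ∀ s, 0 ≤ Φ s := fun s => add_nonneg (by positivity)
    (Finset.sum_nonneg fun i _ => Set.indicator_nonneg (fun s' _ => by positivity) _)
  have hptwise : ∀ s ∈ Set.Ioc T₁ t, FD s ≤ Φ s := by
    intro s hs
    by_cases hg : ∃ i : ℤ, θ i + ε < s ∧ s < θ (i+1) - ε
    · have h1 := hgood s hs.1.le hg
      have h2 : FD s ≤ L*ε*Real.exp (-k*(t-s)) := by
        calc FD s ≤ Real.exp (-k*(t-s)) * (L*ε) :=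
            mul_le_mul_of_nonneg_left h1 (Real.exp_pos _).le
          _ = L*ε*Real.exp (-k*(t-s)) := by ring
      calc FD s ≤ L*ε*Real.exp (-k*(t-s)) := h2
        _ ≤ Φ s := le_add_of_nonneg_right
            (Finset.sum_nonneg fun i _ => Set.indicator_nonneg (fun s' _ => by positivity) _)
    · obtain ⟨i, hi⟩ := badCover ω ε hω hε θ hθ s hg
      have hmem : s ∈ Set.Icc (θ i - ε) (θ i + ε) := by
        rcases abs_le.1 hi with ⟨h1, h2⟩
        exact ⟨by linarith, by linarith⟩
      have hiI : i ∈ I := by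
        rw [hIdef, Finset.mem_Icc]
        constructor
        · have h1 : T₁ - ε < θ i := by
            rcases abs_le.1 hi with ⟨h1', _⟩
            linarith [hs.1]
          have h2 : θ i < ((i:ℝ)+1)*ω := (hθ i).2
          have : (T₁-ε)/ω < (i:ℝ)+1 := by
            rw [div_lt_iff₀ hω]
            nlinarith
          have hcl : (⌈(T₁-ε)/ω⌉ : ℤ) ≤ i + 1 := Int.ceil_le.2 (by push_cast; linarith)
          omega
        · have h1 : θ i ≤ t + ε := by
            rcases abs_le.1 hi with ⟨_, h2'⟩
            linarith [hs.2]
          exact Int.le_floor.2 ((le_div_iff₀ hω).2 ((hθ i).1.trans h1))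
      have hsingle : (2*M*Real.exp (-k*(t-s))) ≤ ∑ i' ∈ I,
          Set.indicator (Set.Icc (θ i' - ε) (θ i' + ε)) (fun s' => 2*M*Real.exp (-k*(t-s'))) s := by
        calc 2*M*Real.exp (-k*(t-s))
            = Set.indicator (Set.Icc (θ i - ε) (θ i + ε))
                (fun s' => 2*M*Real.exp (-k*(t-s'))) s := by
              rw [Set.indicator_of_mem hmem]
          _ ≤ _ := Finset.single_le_sum
              (f := fun i' => Set.indicator (Set.Icc (θ i' - ε) (θ i' + ε))
                (fun s' => 2*M*Real.exp (-k*(t-s'))) s)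
              (fun i' _ => Set.indicator_nonneg (fun s' _ => by positivity) _) hiI
      have h1 : |G (s+c) - G s| ≤ 2*M := by
        calc |G (s+c) - G s| ≤ |G (s+c)| + |G s| := abs_sub _ _
          _ ≤ 2*M := by linarith [hGb (s+c), hGb s]
      calc FD s ≤ Real.exp (-k*(t-s)) * (2*M) :=
          mul_le_mul_of_nonneg_left h1 (Real.exp_pos _).le
        _ = 2*M*Real.exp (-k*(t-s)) := by ring
        _ ≤ Φ s := by
            rw [hΦdef]
            exact le_add_of_nonneg_of_le (by positivity) hsingle
  have hpart2a : ∫ s in Set.Ioc T₁ t, FD s ≤ ∫ s in Set.Iic t, Φ s := by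
    calc ∫ s in Set.Ioc T₁ t, FD s ≤ ∫ s in Set.Ioc T₁ t, Φ s :=
        setIntegral_mono_on (IFD.mono_set Set.Ioc_subset_Iic_self)
          (hΦint.mono_set Set.Ioc_subset_Iic_self) measurableSet_Ioc hptwise
      _ ≤ ∫ s in Set.Iic t, Φ s :=
        setIntegral_mono_set hΦint (Filter.Eventually.of_forall hΦ0)
          (HasSubset.Subset.eventuallyLE Set.Ioc_subset_Iic_self)
  -- evaluate / bound the integral of Φ
  set E : ℝ := Real.exp (k*ω) / (1-Real.exp (-(k*ω))) with hEdef
  have hE0 : 0 ≤ E := by positivity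
  set A0 : ℝ := 4*M*ε*Real.exp (k*ε) with hA0def
  have hA00 : 0 ≤ A0 := by positivity
  set v : ℤ → ℝ := fun i => if θ i ≤ t+ε then A0 * Real.exp (-k*(t-θ i)) else 0 with hvdef
  have hv0 : ∀ i, 0 ≤ v i := by
    intro i
    rw [hvdef]
    dsimp only
    split
    · positivity
    · exact le_refl 0
  have hvgeom := geomZ ω k hω hk θ hθ (t+ε) t A0 hA00 v hv0 (fun i => le_refl _)
  have hΦval : ∫ s in Set.Iic t, Φ s ≤ L*ε*(1/k) + A0 * (Real.exp (k*ε) * E) := by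
    have hint1 : IntegrableOn (fun s => L*ε*Real.exp (-k*(t-s))) (Set.Iic t) :=
      (expIntOn k t hk).const_mul _
    have hint2 : IntegrableOn (fun s => ∑ i ∈ I, Set.indicator (Set.Icc (θ i - ε) (θ i + ε))
        (fun s' => 2*M*Real.exp (-k*(t-s'))) s) (Set.Iic t) := by
      apply integrable_finset_sum
      intro i _
      exact ((expIntOn k t hk).const_mul (2*M)).indicator measurableSet_Icc
    rw [hΦdef, MeasureTheory.integral_add hint1 hint2]
    have hfirst : ∫ s in Set.Iic t, L*ε*Real.exp (-k*(t-s)) = L*ε*(1/k) := by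
      rw [MeasureTheory.integral_const_mul, expIntVal k t hk]
    have hsecond : ∫ s in Set.Iic t, (∑ i ∈ I, Set.indicator (Set.Icc (θ i - ε) (θ i + ε))
        (fun s' => 2*M*Real.exp (-k*(t-s'))) s) ≤ A0 * (Real.exp (k*ε) * E) := by
      rw [MeasureTheory.integral_finset_sum _ (fun i _ =>
        ((expIntOn k t hk).const_mul (2*M)).indicator measurableSet_Icc)]
      have hterm : ∀ i ∈ I, (∫ s in Set.Iic t, Set.indicator (Set.Icc (θ i - ε) (θ i + ε))
          (fun s' => 2*M*Real.exp (-k*(t-s'))) s) ≤ v i := by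
        intro i _
        rw [MeasureTheory.integral_indicator measurableSet_Icc,
          Measure.restrict_restrict measurableSet_Icc]
        by_cases h : θ i ≤ t+ε
        · have hfin : volume (Set.Icc (θ i - ε) (θ i + ε) ∩ Set.Iic t) < ⊤ :=
            lt_of_le_of_lt (measure_mono Set.inter_subset_left) measure_Icc_lt_top
          have hintA : IntegrableOn (fun s' => 2*M*Real.exp (-k*(t-s')))
              (Set.Icc (θ i - ε) (θ i + ε) ∩ Set.Iic t) :=
            IntegrableOn.mono_set ((expIntOn k t hk).const_mul (2*M)) Set.inter_subset_right
          have hmono : (∫ s in Set.Icc (θ i - ε) (θ i + ε) ∩ Set.Iic t,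
              2*M*Real.exp (-k*(t-s)))
              ≤ ∫ _s in Set.Icc (θ i - ε) (θ i + ε) ∩ Set.Iic t,
                2*M*Real.exp (-k*(t-(θ i+ε))) := by
            apply setIntegral_mono_on hintA
              (integrableOn_const hfin.ne)
              (measurableSet_Icc.inter measurableSet_Iic)
            intro s hs
            have hsle : s ≤ θ i + ε := hs.1.2
            have : Real.exp (-k*(t-s)) ≤ Real.exp (-k*(t-(θ i+ε))) :=
              Real.exp_le_exp.2 (by nlinarith)
            nlinarith [Real.exp_pos (-k*(t-s))]
          have hconst : (∫ _s in Set.Icc (θ i - ε) (θ i + ε) ∩ Set.Iic t,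
              2*M*Real.exp (-k*(t-(θ i+ε))))
              = (volume (Set.Icc (θ i - ε) (θ i + ε) ∩ Set.Iic t)).toReal
                * (2*M*Real.exp (-k*(t-(θ i+ε)))) := by
            rw [setIntegral_const, smul_eq_mul, measureReal_def]
          have hvol : (volume (Set.Icc (θ i - ε) (θ i + ε) ∩ Set.Iic t)).toReal ≤ 2*ε := by
            have h1 : volume (Set.Icc (θ i - ε) (θ i + ε) ∩ Set.Iic t)
                ≤ volume (Set.Icc (θ i - ε) (θ i + ε)) := measure_mono Set.inter_subset_left
            have h2 : volume (Set.Icc (θ i - ε) (θ i + ε)) = ENNReal.ofReal (2*ε) := by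
              rw [Real.volume_Icc]
              congr 1
              ring
            calc (volume (Set.Icc (θ i - ε) (θ i + ε) ∩ Set.Iic t)).toReal
                ≤ (volume (Set.Icc (θ i - ε) (θ i + ε))).toReal := by
                  apply ENNReal.toReal_mono _ h1
                  rw [h2]
                  exact ENNReal.ofReal_ne_top
              _ = 2*ε := by rw [h2, ENNReal.toReal_ofReal (by positivity)]
          have hexpsplit : Real.exp (-k*(t-(θ i+ε))) = Real.exp (k*ε) * Real.exp (-k*(t-θ i)) := by
            rw [← Real.exp_add]
            ring_nf
          calc (∫ s in Set.Icc (θ i - ε) (θ i + ε) ∩ Set.Iic t, 2*M*Real.exp (-k*(t-s)))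
              ≤ (volume (Set.Icc (θ i - ε) (θ i + ε) ∩ Set.Iic t)).toReal
                * (2*M*Real.exp (-k*(t-(θ i+ε)))) := hmono.trans hconst.le
            _ ≤ (2*ε) * (2*M*Real.exp (-k*(t-(θ i+ε)))) := by
                apply mul_le_mul_of_nonneg_right hvol (by positivity)
            _ = v i := by
                rw [hvdef]
                dsimp only
                rw [if_pos h, hexpsplit, hA0def]
                ring
        · have hempty : Set.Icc (θ i - ε) (θ i + ε) ∩ Set.Iic t = ∅ := by
            ext s
            simp only [Set.mem_inter_iff, Set.mem_Icc, Set.mem_Iic, Set.mem_empty_iff_false,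
              iff_false]
            rintro ⟨⟨h1, _⟩, h3⟩
            push_neg at h
            linarith
          rw [hempty]
          simp only [Measure.restrict_empty, integral_zero_measure]
          rw [hvdef]
          dsimp only
          rw [if_neg h]
      calc (∑ i ∈ I, ∫ s in Set.Iic t, Set.indicator (Set.Icc (θ i - ε) (θ i + ε))
            (fun s' => 2*M*Real.exp (-k*(t-s'))) s)
          ≤ ∑ i ∈ I, v i := Finset.sum_le_sum hterm
        _ ≤ ∑' i, v i := Summable.sum_le_tsum I (fun i _ => hv0 i) hvgeom.1
        _ ≤ A0 * (Real.exp (-k*(t-(t+ε))) * E) := hvgeom.2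
        _ = A0 * (Real.exp (k*ε) * E) := by
            congr 2
            ring_nf
    linarith [hfirst, hsecond]
  -- combine
  have hkey' : Real.exp (k*ε) * (Real.exp (k*ε) * E)
      ≤ Real.exp (4*(k*ω)) / (1 - Real.exp (-(k*ω))) := by
    rw [hEdef, show Real.exp (k*ε) * (Real.exp (k*ε) * (Real.exp (k*ω)/(1-Real.exp (-(k*ω)))))
        = (Real.exp (k*ε) * Real.exp (k*ε) * Real.exp (k*ω))/(1-Real.exp (-(k*ω))) from by ring,
      ← Real.exp_add, ← Real.exp_add]
    have harg : Real.exp (k*ε + k*ε + k*ω) ≤ Real.exp (4*(k*ω)) :=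
      Real.exp_le_exp.2 (by nlinarith [mul_pos hk (sub_pos.2 hεω)])
    exact div_le_div_of_nonneg_right harg hden.le
  have h2 : A0 * (Real.exp (k*ε) * E)
      ≤ 4*M*ε*(Real.exp (4*(k*ω))/(1-Real.exp (-(k*ω)))) := by
    rw [hA0def, show 4*M*ε*Real.exp (k*ε) * (Real.exp (k*ε)*E)
        = (4*M*ε) * (Real.exp (k*ε)*(Real.exp (k*ε)*E)) from by ring]
    exact mul_le_mul_of_nonneg_left hkey' (by positivity)
  have hpart2 : ∫ s in Set.Ioc T₁ t, FD s
      ≤ L*ε*(1/k) + 4*M*ε*(Real.exp (4*(k*ω))/(1-Real.exp (-(k*ω)))) := by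
    have := hpart2a.trans hΦval
    linarith
  have hR : (1 + L/k + 4*M*Real.exp (4*(k*ω)) / (1 - Real.exp (-(k*ω)))) * ε
      = ε + L*ε*(1/k) + 4*M*ε*(Real.exp (4*(k*ω))/(1-Real.exp (-(k*ω)))) := by ring
  rw [hR]
  linarith

end Main
set_option maxHeartbeats 1000000 in
private lemma sumest (ω k ε T₁ T₂ t : ℝ) (p : ℤ) (hp : 1 ≤ p) (θ : ℤ → ℝ)
    (hθ : ∀ i : ℤ, (i:ℝ) * ω ≤ θ i ∧ θ i < ((i:ℝ)+1) * ω)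
    (hω : 0 < ω) (hk : 0 < k) (hε : 0 < ε) (hεω : ε < ω)
    (ht12 : T₁ < T₂) (ht : T₂ ≤ t)
    (A : ℤ → ℝ) (mA lA : ℝ) (hmA : 0 ≤ mA) (hlA : 0 ≤ lA)
    (hAbd : ∀ i, |A i| ≤ mA)
    (hshift : ∀ i : ℤ, T₁ ≤ θ i →
      |θ (i+p) - θ i - (p:ℝ)*ω| < ε ∧ |A (i+p) - A i| ≤ lA * ε)
    (htail0 : mA * Real.exp (-k*(T₂-T₁)) * (Real.exp (k*ω)/(1-Real.exp (-(k*ω)))) ≤ ε/2)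
    (i₀ : ℤ) (ht1 : θ i₀ + ε < t) (ht2 : t < θ (i₀+1) - ε) :
    |(∑' i : ℤ, (if θ i < t + (p:ℝ)*ω then
          Real.exp (-k*(t + (p:ℝ)*ω - θ i)) * A i else 0))
      - ∑' i : ℤ, (if θ i < t then Real.exp (-k*(t - θ i)) * A i else 0)|
      ≤ ((k*Real.exp (k*ω)*mA + Real.exp (k*ω)*lA)
            * (Real.exp (k*ω)/(1-Real.exp (-(k*ω)))) + (1+Real.exp (k*ω))) * ε := by
  set c : ℝ := (p:ℝ)*ω with hcdef
  have hden : 0 < 1 - Real.exp (-(k*ω)) := by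
    have : Real.exp (-(k*ω)) < 1 := Real.exp_lt_one_iff.2 (by nlinarith)
    linarith
  set E : ℝ := Real.exp (k*ω)/(1-Real.exp (-(k*ω))) with hEdef
  have hE0 : 0 ≤ E := by positivity
  have hmono : Monotone θ := monotone_int_of_le_succ (fun i => by
    have h1 := (hθ i).2
    have h2 := (hθ (i+1)).1
    push_cast at h2
    linarith)
  -- basic gap facts
  have hgap_lo : ∀ i : ℤ, θ i + c - ω < θ (i+p) := by
    intro i
    have h1 := (hθ i).2
    have h2 := (hθ (i+p)).1
    push_cast at h2
    have : ((p:ℝ)) * ω - ω + θ i < ((i:ℝ)+(p:ℝ)) * ω := by nlinarith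
    nlinarith [h2]
  have hgap_hi : ∀ i : ℤ, θ (i+p) < θ i + c + ω := by
    intro i
    have h1 := (hθ i).1
    have h2 := (hθ (i+p)).2
    push_cast at h2
    nlinarith
  -- functions
  set b : ℤ → ℝ := fun i => if θ i < t then Real.exp (-k*(t - θ i)) * A i else 0 with hbdef
  set a : ℤ → ℝ := fun i => if θ (i+p) < t + c then Real.exp (-k*(t + c - θ (i+p))) * A (i+p) else 0
    with hadef
  have hreindex : (∑' i : ℤ, (if θ i < t + c then Real.exp (-k*(t + c - θ i)) * A i else 0))
      = ∑' i, a i := by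
    exact ((Equiv.addRight p).tsum_eq
      (fun i => if θ i < t + c then Real.exp (-k*(t + c - θ i)) * A i else 0)).symm
  -- summability of |a|, |b|
  have hbabs := geomZ ω k hω hk θ hθ t t mA hmA (fun i => |b i|) (fun i => abs_nonneg _)
    (by
      intro i
      rw [hbdef]
      dsimp only
      by_cases h : θ i < t
      · rw [if_pos h, if_pos h.le, abs_mul, abs_of_pos (Real.exp_pos _)]
        exact mul_le_mul_of_nonneg_left (hAbd i) (Real.exp_pos _).le |>.trans
          (le_of_eq (mul_comm _ _))
      · rw [if_neg h, abs_zero]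
        split <;> positivity)
  have haabs := geomZ ω k hω hk θ hθ (t+ω) t (mA * Real.exp (k*ω)) (by positivity)
    (fun i => |a i|) (fun i => abs_nonneg _)
    (by
      intro i
      rw [hadef]
      dsimp only
      by_cases h : θ (i+p) < t + c
      · have h1 : θ i ≤ t + ω := by linarith [hgap_lo i]
        rw [if_pos h, if_pos h1, abs_mul, abs_of_pos (Real.exp_pos _)]
        have h2 : Real.exp (-k*(t + c - θ (i+p))) ≤ Real.exp (k*ω) * Real.exp (-k*(t - θ i)) := by
          rw [← Real.exp_add]
          apply Real.exp_le_exp.2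
          nlinarith [hgap_hi i]
        calc Real.exp (-k*(t + c - θ (i+p))) * |A (i+p)|
            ≤ Real.exp (-k*(t + c - θ (i+p))) * mA :=
              mul_le_mul_of_nonneg_left (hAbd _) (Real.exp_pos _).le
          _ ≤ (Real.exp (k*ω) * Real.exp (-k*(t - θ i))) * mA :=
              mul_le_mul_of_nonneg_right h2 hmA
          _ = mA * Real.exp (k*ω) * Real.exp (-k*(t - θ i)) := by ring
      · rw [if_neg h, abs_zero]
        split <;> positivity)
  have hsa : Summable a := Summable.of_abs haabs.1
  have hsb : Summable b := Summable.of_abs hbabs.1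
  -- majorants
  set c₁ : ℝ := (k*Real.exp (k*ω)*mA + Real.exp (k*ω)*lA) * ε with hc1def
  set c₂ : ℝ := (1+Real.exp (k*ω))*mA with hc2def
  have hc₁0 : 0 ≤ c₁ := by positivity
  have hc₂0 : 0 ≤ c₂ := by positivity
  set w₁ : ℤ → ℝ := fun i => if θ i ≤ t then c₁ * Real.exp (-k*(t - θ i)) else 0 with hw1def
  set w₂ : ℤ → ℝ := fun i => if θ i ≤ T₁ then c₂ * Real.exp (-k*(t - θ i)) else 0 with hw2def
  have hw₁0 : ∀ i, 0 ≤ w₁ i := by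
    intro i; rw [hw1def]; dsimp only; split <;> positivity
  have hw₂0 : ∀ i, 0 ≤ w₂ i := by
    intro i; rw [hw2def]; dsimp only; split <;> positivity
  have hw1g := geomZ ω k hω hk θ hθ t t c₁ hc₁0 w₁ hw₁0 (fun i => le_refl _)
  have hw2g := geomZ ω k hω hk θ hθ T₁ t c₂ hc₂0 w₂ hw₂0 (fun i => le_refl _)
  -- pointwise bound
  have hpt : ∀ i : ℤ, |a i - b i| ≤ w₁ i + w₂ i := by
    intro i
    rcases le_or_gt T₁ (θ i) with hT | hT
    · -- θ i ≥ T₁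
      have hkey : |a i - b i| ≤ w₁ i := by
        rcases lt_or_ge (θ i) t with hit | hit
        · -- both indicators true
          have hile : i ≤ i₀ := by
            by_contra hgt
            push_neg at hgt
            have : θ (i₀+1) ≤ θ i := hmono (by omega)
            linarith
          have hsep : θ i < t - ε := by
            have : θ i ≤ θ i₀ := hmono hile
            linarith
          obtain ⟨hδ, hA'⟩ := hshift i hT
          set δ : ℝ := θ (i+p) - θ i - c with hδdef
          have habs : |δ| < ε := hδ
          have hind : θ (i+p) < t + c := by
            have : θ (i+p) < θ i + c + ε := by
              rcases abs_lt.1 habs with ⟨_, h2⟩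
              linarith
            linarith
          rw [hadef, hbdef]
          dsimp only
          rw [if_pos hind, if_pos hit, hw1def]
          dsimp only
          rw [if_pos hit.le]
          have hsplit : Real.exp (-k*(t + c - θ (i+p)))
              = Real.exp (-k*(t - θ i)) * Real.exp (k*δ) := by
            rw [← Real.exp_add]
            congr 1
            rw [hδdef]
            ring
          have heq : Real.exp (-k*(t + c - θ (i+p))) * A (i+p) - Real.exp (-k*(t - θ i)) * A i
              = Real.exp (-k*(t - θ i)) * ((Real.exp (k*δ) - 1) * A (i+p) + (A (i+p) - A i)) := by
            rw [hsplit]; ring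
          rw [heq, abs_mul, abs_of_pos (Real.exp_pos _)]
          have hbound : |(Real.exp (k*δ) - 1) * A (i+p) + (A (i+p) - A i)| ≤ c₁ := by
            have h1 : |Real.exp (k*δ) - 1| ≤ k*ε*Real.exp (k*ω) := by
              calc |Real.exp (k*δ) - 1| ≤ |k*δ| * Real.exp |k*δ| := expabs _
                _ ≤ k*ε*Real.exp (k*ω) := by
                    have h2 : |k*δ| = k * |δ| := by
                      rw [abs_mul, abs_of_pos hk]
                    rw [h2]
                    have h3 : k * |δ| ≤ k * ε := mul_le_mul_of_nonneg_left habs.le hk.le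
                    have h4 : Real.exp (k*|δ|) ≤ Real.exp (k*ω) :=
                      Real.exp_le_exp.2 (by nlinarith)
                    nlinarith [Real.exp_pos (k*|δ|), abs_nonneg δ,
                      mul_pos hk hε]
            calc |(Real.exp (k*δ) - 1) * A (i+p) + (A (i+p) - A i)|
                ≤ |(Real.exp (k*δ) - 1)| * |A (i+p)| + |A (i+p) - A i| := by
                  refine (abs_add_le _ _).trans ?_
                  rw [abs_mul]
              _ ≤ (k*ε*Real.exp (k*ω)) * mA + lA * ε := by
                  have := hAbd (i+p)
                  have h5 : |Real.exp (k*δ) - 1| * |A (i+p)| ≤ (k*ε*Real.exp (k*ω)) * mA :=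
                    mul_le_mul h1 (hAbd (i+p)) (abs_nonneg _) (by positivity)
                  linarith [hA']
              _ ≤ c₁ := by
                  rw [hc1def]
                  have h6 : lA * ε ≤ Real.exp (k*ω) * lA * ε := by
                    nlinarith [mul_nonneg hlA hε.le,
                      Real.one_le_exp (by positivity : (0:ℝ) ≤ k*ω)]
                  nlinarith
          calc Real.exp (-k*(t - θ i)) * |(Real.exp (k*δ) - 1) * A (i+p) + (A (i+p) - A i)|
              ≤ Real.exp (-k*(t - θ i)) * c₁ :=
                mul_le_mul_of_nonneg_left hbound (Real.exp_pos _).le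
            _ = c₁ * Real.exp (-k*(t - θ i)) := mul_comm _ _
        · -- both indicators false
          have hige : i₀ + 1 ≤ i := by
            by_contra hgt
            push_neg at hgt
            have : θ i ≤ θ i₀ := hmono (by omega)
            linarith
          have hsep : t + ε < θ i := by
            have : θ (i₀+1) ≤ θ i := hmono hige
            linarith
          have hindb : ¬ (θ i < t) := not_lt.2 hit
          have hinda : ¬ (θ (i+p) < t + c) := by
            push_neg
            have h1 := hgap_lo i
            obtain ⟨hδ, _⟩ := hshift i hT
            rcases abs_lt.1 hδ with ⟨h2, _⟩
            linarith
          rw [hadef, hbdef]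
          dsimp only
          rw [if_neg hinda, if_neg hindb]
          simpa using hw₁0 i
      have := hw₂0 i
      linarith
    · -- θ i < T₁ : use w₂
      have h1 : |b i| ≤ mA * Real.exp (-k*(t - θ i)) := by
        rw [hbdef]
        dsimp only
        by_cases h : θ i < t
        · rw [if_pos h, abs_mul, abs_of_pos (Real.exp_pos _)]
          calc Real.exp (-k*(t - θ i)) * |A i| ≤ Real.exp (-k*(t - θ i)) * mA :=
              mul_le_mul_of_nonneg_left (hAbd i) (Real.exp_pos _).le
            _ = mA * Real.exp (-k*(t - θ i)) := mul_comm _ _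
        · rw [if_neg h, abs_zero]; positivity
      have h2 : |a i| ≤ mA * Real.exp (k*ω) * Real.exp (-k*(t - θ i)) := by
        rw [hadef]
        dsimp only
        by_cases h : θ (i+p) < t + c
        · rw [if_pos h, abs_mul, abs_of_pos (Real.exp_pos _)]
          have h2' : Real.exp (-k*(t + c - θ (i+p))) ≤ Real.exp (k*ω) * Real.exp (-k*(t - θ i)) := by
            rw [← Real.exp_add]
            apply Real.exp_le_exp.2
            nlinarith [hgap_hi i]
          calc Real.exp (-k*(t + c - θ (i+p))) * |A (i+p)|
              ≤ Real.exp (-k*(t + c - θ (i+p))) * mA :=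
                mul_le_mul_of_nonneg_left (hAbd _) (Real.exp_pos _).le
            _ ≤ (Real.exp (k*ω) * Real.exp (-k*(t - θ i))) * mA :=
                mul_le_mul_of_nonneg_right h2' hmA
            _ = mA * Real.exp (k*ω) * Real.exp (-k*(t - θ i)) := by ring
        · rw [if_neg h, abs_zero]; positivity
      have h3 : |a i - b i| ≤ w₂ i := by
        rw [hw2def]
        dsimp only
        rw [if_pos hT.le]
        calc |a i - b i| ≤ |a i| + |b i| := abs_sub _ _
          _ ≤ mA * Real.exp (k*ω) * Real.exp (-k*(t - θ i)) + mA * Real.exp (-k*(t - θ i)) := by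
              linarith
          _ = c₂ * Real.exp (-k*(t - θ i)) := by rw [hc2def]; ring
      have := hw₁0 i
      linarith
  -- assemble
  have hsw : Summable (fun i => w₁ i + w₂ i) := hw1g.1.add hw2g.1
  have hsab : Summable (fun i => |a i - b i|) :=
    Summable.of_nonneg_of_le (fun i => abs_nonneg _) hpt hsw
  have hdiff : (∑' i, a i) - (∑' i, b i) = ∑' i, (a i - b i) := (Summable.tsum_sub hsa hsb).symm
  rw [hreindex, hdiff]
  calc |∑' i, (a i - b i)| ≤ ∑' i, |a i - b i| := by
        simpa [Real.norm_eq_abs] using norm_tsum_le_tsum_norm (f := fun i => a i - b i) hsab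
    _ ≤ ∑' i, (w₁ i + w₂ i) := Summable.tsum_le_tsum hpt hsab hsw
    _ = (∑' i, w₁ i) + ∑' i, w₂ i := Summable.tsum_add hw1g.1 hw2g.1
    _ ≤ c₁ * (Real.exp (-k*(t-t)) * E) + c₂ * (Real.exp (-k*(t-T₁)) * E) := by
        have := hw1g.2
        have := hw2g.2
        linarith
    _ ≤ ((k*Real.exp (k*ω)*mA + Real.exp (k*ω)*lA) * E + (1+Real.exp (k*ω))) * ε := by
        have h1 : Real.exp (-k*(t-t)) = 1 := by norm_num
        rw [h1]
        have h2 : Real.exp (-k*(t-T₁)) ≤ Real.exp (-k*(T₂-T₁)) :=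
          Real.exp_le_exp.2 (by nlinarith)
        have h6 : (0:ℝ) ≤ 1 + Real.exp (k*ω) := by positivity
        have h3 : c₂ * (Real.exp (-k*(t-T₁)) * E) ≤ (1+Real.exp (k*ω)) * ε := by
          have h4 : mA * (Real.exp (-k*(t-T₁)) * E) ≤ ε/2 := by
            have h5 : mA * (Real.exp (-k*(t-T₁)) * E) ≤ mA * (Real.exp (-k*(T₂-T₁)) * E) := by
              apply mul_le_mul_of_nonneg_left _ hmA
              exact mul_le_mul_of_nonneg_right h2 hE0
            calc mA * (Real.exp (-k*(t-T₁)) * E) ≤ mA * (Real.exp (-k*(T₂-T₁)) * E) := h5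
              _ = mA * Real.exp (-k*(T₂-T₁)) * E := by ring
              _ ≤ ε/2 := htail0
          calc c₂ * (Real.exp (-k*(t-T₁)) * E)
              = (1+Real.exp (k*ω)) * (mA * (Real.exp (-k*(t-T₁)) * E)) := by rw [hc2def]; ring
            _ ≤ (1+Real.exp (k*ω)) * (ε/2) := mul_le_mul_of_nonneg_left h4 h6
            _ ≤ (1+Real.exp (k*ω)) * ε := by nlinarith
        have h7 : c₁ * (1 * E) = (k*Real.exp (k*ω)*mA + Real.exp (k*ω)*lA) * E * ε := by
          rw [hc1def]; ring
        linarith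


set_option maxHeartbeats 2000000 in
/-- There exists a constant `C ≥ 0`, depending only on the data
`m, ω, k, l, l_J, m₀,…,m_m, m_J, I₀` (not on `p, ε, φ, T₁, T₂, t`), such that under the
eventual `p`-property hypotheses (i)–(iii) one has
`‖(Tφ)(t + pω) − (Tφ)(t)‖ ≤ C·ε` for every `t ≥ T₂` lying `ε`-inside an interval of
continuity (the key estimate for eventually `pω`-periodic solutions, Theorem 1, assertion 2). -/
theorem stmt7
    (m : ℕ) (hm : 1 ≤ m) (ω : ℝ) (hω : 0 < ω) (θ : ℤ → ℝ)
    (hθ : ∀ i : ℤ, (i : ℝ) * ω ≤ θ i ∧ θ i < ((i : ℝ) + 1) * ω)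
    (k : Fin (m + 1) → ℝ) (hk : ∀ j, 0 < k j) (I₀ : ℝ) (hI : 0 < I₀)
    (g₀ : (Fin m → ℝ) → ℝ) (g : Fin (m + 1) → ℝ → ℝ) (J₀ : ℝ → ℝ)
    (l : Fin (m + 1) → ℝ) (lJ : ℝ) (mc : Fin (m + 1) → ℝ) (mJ : ℝ)
    (hl : ∀ j, 0 ≤ l j) (hlJ : 0 ≤ lJ) (hmc : ∀ j, 0 ≤ mc j) (hmJ : 0 ≤ mJ)
    (hg₀lip : ∀ z w : Fin m → ℝ, |g₀ z - g₀ w| ≤ l 0 * eNorm (fun i => z i - w i))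
    (hglip : ∀ j, j ≠ 0 → ∀ a b : ℝ, |g j a - g j b| ≤ l j * |a - b|)
    (hJlip : ∀ a b : ℝ, |J₀ a - J₀ b| ≤ lJ * |a - b|)
    (hg₀bd : ∀ z, |g₀ z| ≤ mc 0)
    (hgbd : ∀ j, j ≠ 0 → ∀ a, |g j a| ≤ mc j)
    (hJbd : ∀ a, |J₀ a| ≤ mJ)
 :
    ∃ C : ℝ, 0 ≤ C ∧
      ∀ (p : ℕ), 1 ≤ p → ∀ ε : ℝ, 0 < ε → ε < ω / 4 →
      ∀ φ : ℝ → Fin (m + 1) → ℝ, φ ∈ OmegaSet m ω k mc I₀ mJ →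
      ∀ T₁ T₂ : ℝ, T₁ < T₂ →
      (∀ i : ℤ, T₁ ≤ θ i →
        |θ (i + (p : ℤ)) - θ i - (p : ℝ) * ω| < ε ∧
        eNorm (fun j => φ (θ (i + (p : ℤ))) j - φ (θ i) j) < ε) →
      (∀ s : ℝ, T₁ ≤ s → ∀ i : ℤ, θ i + ε < s → s < θ (i + 1) - ε →
        θ (i + (p : ℤ)) < s + (p : ℝ) * ω ∧ s + (p : ℝ) * ω < θ (i + (p : ℤ) + 1) ∧
        eNorm (fun j => φ (s + (p : ℝ) * ω) j - φ s j) < ε) →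
      (2 * Real.exp (-(k 0) * (T₂ - T₁)) * (mc 0 / k 0 + (I₀ + mJ) * Real.exp (k 0 * ω) / (1 - Real.exp (-(k 0) * ω))) < ε) →
      (∀ j, j ≠ 0 → 4 * Real.exp (-(k j) * (T₂ - T₁)) * (mc j / k j) < ε) →
      ∀ t : ℝ, T₂ ≤ t → ∀ i : ℤ, θ i + ε < t → t < θ (i + 1) - ε →
        eNorm (fun j =>
          Tmap m θ k I₀ g₀ g J₀ φ (t + (p : ℝ) * ω) j - Tmap m θ k I₀ g₀ g J₀ φ t j) ≤ C * ε := by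
  classical
  set Cint : Fin (m+1) → ℝ := fun j =>
    1 + 2*(m:ℝ)*l j/(k j) + 4*(mc j)*Real.exp (4*(k j*ω)) / (1 - Real.exp (-(k j*ω))) with hCint
  set Csum : ℝ := (k 0*Real.exp (k 0*ω)*(I₀+mJ) + Real.exp (k 0*ω)*lJ)
      * (Real.exp (k 0*ω)/(1-Real.exp (-(k 0*ω)))) + (1+Real.exp (k 0*ω)) with hCsum
  set D : Fin (m+1) → ℝ := fun j => Cint j + if j = 0 then Csum else 0 with hD
  have hden : ∀ j, 0 < 1 - Real.exp (-(k j*ω)) := fun j => by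
    have : Real.exp (-(k j*ω)) < 1 := Real.exp_lt_one_iff.2 (by nlinarith [hk j])
    linarith
  have hCint0 : ∀ j, 0 ≤ Cint j := fun j => by
    have h1 := hden j
    have h2 := hk j
    have h3 := hl j
    have h4 := hmc j
    have h5 : 0 ≤ 2*(m:ℝ)*l j/(k j) := by positivity
    have h6 : 0 ≤ 4*(mc j)*Real.exp (4*(k j*ω)) / (1 - Real.exp (-(k j*ω))) := by positivity
    rw [hCint]
    dsimp only
    linarith
  have hCsum0 : 0 ≤ Csum := by
    have h1 := hden 0
    have h2 := hk 0
    have hI' : 0 ≤ I₀ + mJ := by linarith [hI]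
    rw [hCsum]
    positivity
  have hD0 : ∀ j, 0 ≤ D j := fun j => by
    rw [hD]
    dsimp only
    split
    · linarith [hCint0 j]
    · simpa using hCint0 j
  refine ⟨∑ j, D j, Finset.sum_nonneg (fun j _ => hD0 j), ?_⟩
  intro p hp ε hε hεω4 φ hφ T₁ T₂ hT12 hi hii hiii0 hiiij t htT2 i hti1 hti2
  obtain ⟨hφm, -, -⟩ := hφ
  have hεω' : ε < ω := by linarith
  have hφj : ∀ j : Fin (m+1), Measurable (fun s => φ s j) :=
    fun j => (measurable_pi_apply j).comp hφm
  have hgoodv : ∀ s, T₁ ≤ s → (∃ i' : ℤ, θ i' + ε < s ∧ s < θ (i'+1) - ε) →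
      ∀ j : Fin (m+1), |φ (s+(p:ℝ)*ω) j - φ s j| ≤ ε := by
    rintro s hs ⟨i', h1, h2⟩ j
    have h3 := (hii s hs i' h1 h2).2.2
    have h4 := abs_le_eNorm (fun j => φ (s+(p:ℝ)*ω) j - φ s j) j
    exact le_of_lt (lt_of_le_of_lt h4 h3)
  have hm1 : (1:ℝ) ≤ (m:ℝ) := by exact_mod_cast hm
  have hcoord : ∀ j : Fin (m+1),
      |Tmap m θ k I₀ g₀ g J₀ φ (t + (p:ℝ)*ω) j - Tmap m θ k I₀ g₀ g J₀ φ t j| ≤ D j * ε := by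
    intro j
    by_cases hj : j = 0
    · subst hj
      have hT0 : ∀ τ, Tmap m θ k I₀ g₀ g J₀ φ τ 0
          = -(∫ s in Set.Iic τ, Real.exp (-(k 0) * (τ - s)) * g₀ (fun i' => φ s 0 - φ s i'.succ))
            + ∑' i' : ℤ, (if θ i' < τ then
                Real.exp (-(k 0) * (τ - θ i')) * (I₀ + J₀ (φ (θ i') 0)) else 0) := by
        intro τ
        simp [Tmap]
      rw [hT0, hT0]
      have habstr : ∀ (x₁ x₀ s₁ s₀ : ℝ), |(-x₁ + s₁) - (-x₀ + s₀)| ≤ |x₁ - x₀| + |s₁ - s₀| := by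
        intro x₁ x₀ s₁ s₀
        rw [show (-x₁ + s₁) - (-x₀ + s₀) = (s₁ - s₀) - (x₁ - x₀) from by ring]
        exact (abs_sub _ _).trans (le_of_eq (add_comm _ _))
      refine le_trans (habstr _ _ _ _) ?_
      -- continuity of g₀
      have hg0c : Continuous g₀ := by
        have : LipschitzWith (Real.toNNReal (l 0 * m)) g₀ := by
          apply LipschitzWith.of_dist_le_mul
          intro z w
          rw [Real.dist_eq, Real.coe_toNNReal _ (mul_nonneg (hl 0) (Nat.cast_nonneg m))]
          calc |g₀ z - g₀ w| ≤ l 0 * eNorm (fun i' => z i' - w i') := hg₀lip z w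
            _ ≤ l 0 * ∑ i', |z i' - w i'| :=
                mul_le_mul_of_nonneg_left (eNorm_le_sum _) (hl 0)
            _ ≤ l 0 * ∑ _i' : Fin m, dist z w := by
                apply mul_le_mul_of_nonneg_left _ (hl 0)
                apply Finset.sum_le_sum
                intro i' _
                rw [← Real.dist_eq]
                exact dist_le_pi_dist z w i'
            _ = l 0 * (m * dist z w) := by
                rw [Finset.sum_const, Finset.card_univ, Fintype.card_fin, nsmul_eq_mul]
            _ = l 0 * m * dist z w := by ring
        exact this.continuous
      have hG0m : Measurable (fun s => g₀ (fun i' => φ s 0 - φ s i'.succ)) := by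
        apply hg0c.measurable.comp
        apply measurable_pi_lambda
        intro i'
        exact (hφj 0).sub (hφj i'.succ)
      have hgood0 : ∀ s, T₁ ≤ s → (∃ i' : ℤ, θ i' + ε < s ∧ s < θ (i'+1) - ε) →
          |g₀ (fun i' => φ (s+(p:ℝ)*ω) 0 - φ (s+(p:ℝ)*ω) i'.succ)
            - g₀ (fun i' => φ s 0 - φ s i'.succ)| ≤ (2*(m:ℝ)*l 0) * ε := by
        intro s hs hex
        calc |g₀ (fun i' => φ (s+(p:ℝ)*ω) 0 - φ (s+(p:ℝ)*ω) i'.succ)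
              - g₀ (fun i' => φ s 0 - φ s i'.succ)|
            ≤ l 0 * eNorm (fun i' => (φ (s+(p:ℝ)*ω) 0 - φ (s+(p:ℝ)*ω) i'.succ)
                - (φ s 0 - φ s i'.succ)) := hg₀lip _ _
          _ ≤ l 0 * ∑ i' : Fin m, |(φ (s+(p:ℝ)*ω) 0 - φ (s+(p:ℝ)*ω) i'.succ) - (φ s 0 - φ s i'.succ)| :=
              mul_le_mul_of_nonneg_left (eNorm_le_sum _) (hl 0)
          _ ≤ l 0 * ∑ _i' : Fin m, 2*ε := by
              apply mul_le_mul_of_nonneg_left _ (hl 0)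
              apply Finset.sum_le_sum
              intro i' _
              have h0 := hgoodv s hs hex 0
              have h1 := hgoodv s hs hex i'.succ
              calc |(φ (s+(p:ℝ)*ω) 0 - φ (s+(p:ℝ)*ω) i'.succ) - (φ s 0 - φ s i'.succ)|
                  = |(φ (s+(p:ℝ)*ω) 0 - φ s 0) - (φ (s+(p:ℝ)*ω) i'.succ - φ s i'.succ)| := by
                    congr 1; ring
                _ ≤ |φ (s+(p:ℝ)*ω) 0 - φ s 0| + |φ (s+(p:ℝ)*ω) i'.succ - φ s i'.succ| :=
                    abs_sub _ _
                _ ≤ 2*ε := by linarith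
          _ = l 0 * ((m:ℝ) * (2*ε)) := by
              rw [Finset.sum_const, Finset.card_univ, Fintype.card_fin, nsmul_eq_mul]
          _ = (2*(m:ℝ)*l 0) * ε := by ring
      have htail0' : 2 * (mc 0) * Real.exp (-(k 0)*(T₂-T₁)) / (k 0) ≤ ε := by
        have h1 := hiii0
        have hq : 0 ≤ (I₀ + mJ) * Real.exp (k 0 * ω) / (1 - Real.exp (-(k 0) * ω)) := by
          have hd := hden 0
          rw [← neg_mul] at hd
          have hI' : 0 ≤ I₀ + mJ := by linarith
          positivity
        have he : 0 < Real.exp (-(k 0)*(T₂-T₁)) := Real.exp_pos _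
        have hk0 := hk 0
        have hmc0 := hmc 0
        have hmk : 0 ≤ mc 0 / k 0 := by positivity
        have heq : 2 * (mc 0) * Real.exp (-(k 0)*(T₂-T₁)) / (k 0)
            = 2 * Real.exp (-(k 0)*(T₂-T₁)) * (mc 0 / k 0) := by
          field_simp
        rw [heq]
        nlinarith [mul_nonneg he.le hq]
      have hXest := intest ω (k 0) ε (mc 0) (2*(m:ℝ)*l 0) T₁ T₂ t ((p:ℝ)*ω) θ hθ hω (hk 0)
        (hmc 0) (mul_nonneg (by positivity) (hl 0)) hε hεω' hT12 htT2
        (fun s => g₀ (fun i' => φ s 0 - φ s i'.succ)) hG0m (fun s => hg₀bd _)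
        hgood0 htail0'
      have hXest' : |(∫ s in Set.Iic (t+(p:ℝ)*ω),
            Real.exp (-(k 0)*(t+(p:ℝ)*ω-s)) * g₀ (fun i' => φ s 0 - φ s i'.succ))
          - ∫ s in Set.Iic t, Real.exp (-(k 0)*(t-s)) * g₀ (fun i' => φ s 0 - φ s i'.succ)|
          ≤ (1 + 2*(m:ℝ)*l 0/(k 0) + 4*(mc 0)*Real.exp (4*(k 0*ω))
              / (1 - Real.exp (-(k 0*ω)))) * ε := hXest
      -- sum part
      have hmA : 0 ≤ I₀ + mJ := by linarith
      have hAbd : ∀ i' : ℤ, |I₀ + J₀ (φ (θ i') 0)| ≤ I₀ + mJ := by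
        intro i'
        calc |I₀ + J₀ (φ (θ i') 0)| ≤ |I₀| + |J₀ (φ (θ i') 0)| := abs_add_le _ _
          _ ≤ I₀ + mJ := by
              rw [abs_of_pos hI]
              linarith [hJbd (φ (θ i') 0)]
      have hshift' : ∀ i' : ℤ, T₁ ≤ θ i' →
          |θ (i'+(p:ℤ)) - θ i' - (((p:ℤ)):ℝ)*ω| < ε ∧
          |(I₀ + J₀ (φ (θ (i'+(p:ℤ))) 0)) - (I₀ + J₀ (φ (θ i') 0))| ≤ lJ * ε := by
        intro i' hT
        obtain ⟨h1, h2⟩ := hi i' hT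
        constructor
        · rw [Int.cast_natCast]
          exact h1
        · have h4 := abs_le_eNorm (fun j => φ (θ (i' + (p:ℤ))) j - φ (θ i') j) 0
          have h3 : |φ (θ (i'+(p:ℤ))) 0 - φ (θ i') 0| ≤ ε := le_of_lt (lt_of_le_of_lt h4 h2)
          calc |(I₀ + J₀ (φ (θ (i'+(p:ℤ))) 0)) - (I₀ + J₀ (φ (θ i') 0))|
              = |J₀ (φ (θ (i'+(p:ℤ))) 0) - J₀ (φ (θ i') 0)| := by
                congr 1; ring
            _ ≤ lJ * |φ (θ (i'+(p:ℤ))) 0 - φ (θ i') 0| := hJlip _ _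
            _ ≤ lJ * ε := mul_le_mul_of_nonneg_left h3 hlJ
      have htailS : (I₀+mJ) * Real.exp (-(k 0)*(T₂-T₁))
          * (Real.exp (k 0*ω)/(1-Real.exp (-(k 0*ω)))) ≤ ε/2 := by
        have h1 := hiii0
        have he : 0 < Real.exp (-(k 0)*(T₂-T₁)) := Real.exp_pos _
        have hmk : 0 ≤ mc 0 / k 0 := by
          have := hk 0
          have := hmc 0
          positivity
        have heq : (I₀+mJ) * Real.exp (-(k 0)*(T₂-T₁)) * (Real.exp (k 0*ω)/(1-Real.exp (-(k 0*ω))))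
            = Real.exp (-(k 0)*(T₂-T₁)) * ((I₀ + mJ) * Real.exp (k 0 * ω)
              / (1 - Real.exp (-(k 0) * ω))) := by
          rw [neg_mul (k 0) ω]
          ring
        rw [heq]
        nlinarith [mul_nonneg he.le hmk]
      have hp' : 1 ≤ (p:ℤ) := by exact_mod_cast hp
      have hSest := sumest ω (k 0) ε T₁ T₂ t (p:ℤ) hp' θ hθ hω (hk 0) hε hεω' hT12 htT2
        (fun i' => I₀ + J₀ (φ (θ i') 0)) (I₀+mJ) lJ hmA hlJ hAbd hshift' htailS i hti1 hti2
      rw [Int.cast_natCast] at hSest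
      have hSest' : |(∑' i' : ℤ, (if θ i' < t + (p:ℝ)*ω then
            Real.exp (-(k 0)*(t + (p:ℝ)*ω - θ i')) * (I₀ + J₀ (φ (θ i') 0)) else 0))
          - ∑' i' : ℤ, (if θ i' < t then Real.exp (-(k 0)*(t - θ i')) * (I₀ + J₀ (φ (θ i') 0)) else 0)|
          ≤ ((k 0*Real.exp (k 0*ω)*(I₀+mJ) + Real.exp (k 0*ω)*lJ)
              * (Real.exp (k 0*ω)/(1-Real.exp (-(k 0*ω)))) + (1+Real.exp (k 0*ω))) * ε := hSest
      have hDe : D 0 * ε = (1 + 2*(m:ℝ)*l 0/(k 0) + 4*(mc 0)*Real.exp (4*(k 0*ω))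
          / (1 - Real.exp (-(k 0*ω)))) * ε + ((k 0*Real.exp (k 0*ω)*(I₀+mJ)
            + Real.exp (k 0*ω)*lJ) * (Real.exp (k 0*ω)/(1-Real.exp (-(k 0*ω))))
          + (1+Real.exp (k 0*ω))) * ε := by
        rw [hD, hCint, hCsum]
        dsimp only
        rw [if_pos rfl]
        ring
      rw [hDe]
      exact add_le_add hXest' hSest'
    · have hTj : ∀ τ, Tmap m θ k I₀ g₀ g J₀ φ τ j
          = ∫ s in Set.Iic τ, Real.exp (-(k j) * (τ - s)) * g j (φ s 0 - φ s j) := by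
        intro τ
        simp [Tmap, hj]
      rw [hTj, hTj]
      have hgc : Continuous (g j) := by
        have : LipschitzWith (Real.toNNReal (l j)) (g j) := by
          apply LipschitzWith.of_dist_le_mul
          intro a b
          rw [Real.dist_eq, Real.dist_eq, Real.coe_toNNReal _ (hl j)]
          exact hglip j hj a b
        exact this.continuous
      have hGm : Measurable (fun s => g j (φ s 0 - φ s j)) :=
        hgc.measurable.comp ((hφj 0).sub (hφj j))
      have hgoodj : ∀ s, T₁ ≤ s → (∃ i' : ℤ, θ i' + ε < s ∧ s < θ (i'+1) - ε) →
          |g j (φ (s+(p:ℝ)*ω) 0 - φ (s+(p:ℝ)*ω) j) - g j (φ s 0 - φ s j)|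
            ≤ (2*(m:ℝ)*l j) * ε := by
        intro s hs hex
        have h0 := hgoodv s hs hex 0
        have h1 := hgoodv s hs hex j
        calc |g j (φ (s+(p:ℝ)*ω) 0 - φ (s+(p:ℝ)*ω) j) - g j (φ s 0 - φ s j)|
            ≤ l j * |(φ (s+(p:ℝ)*ω) 0 - φ (s+(p:ℝ)*ω) j) - (φ s 0 - φ s j)| := hglip j hj _ _
          _ ≤ l j * (2*ε) := by
              apply mul_le_mul_of_nonneg_left _ (hl j)
              calc |(φ (s+(p:ℝ)*ω) 0 - φ (s+(p:ℝ)*ω) j) - (φ s 0 - φ s j)|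
                  = |(φ (s+(p:ℝ)*ω) 0 - φ s 0) - (φ (s+(p:ℝ)*ω) j - φ s j)| := by
                    congr 1; ring
                _ ≤ |φ (s+(p:ℝ)*ω) 0 - φ s 0| + |φ (s+(p:ℝ)*ω) j - φ s j| := abs_sub _ _
                _ ≤ 2*ε := by linarith
          _ ≤ (2*(m:ℝ)*l j) * ε := by nlinarith [hl j, hε.le, mul_nonneg (hl j) hε.le]
      have htailj : 2 * (mc j) * Real.exp (-(k j)*(T₂-T₁)) / (k j) ≤ ε := by
        have h1 := hiiij j hj
        have he : 0 < Real.exp (-(k j)*(T₂-T₁)) := Real.exp_pos _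
        have heq : 2 * (mc j) * Real.exp (-(k j)*(T₂-T₁)) / (k j)
            = (4 * Real.exp (-(k j)*(T₂-T₁)) * (mc j / k j)) / 2 := by
          field_simp
          ring
        rw [heq]
        linarith
      have hest := intest ω (k j) ε (mc j) (2*(m:ℝ)*l j) T₁ T₂ t ((p:ℝ)*ω) θ hθ hω (hk j)
        (hmc j) (mul_nonneg (by positivity) (hl j)) hε hεω' hT12 htT2
        (fun s => g j (φ s 0 - φ s j)) hGm (fun s => hgbd j hj _) hgoodj htailj
      have hest' : |(∫ s in Set.Iic (t+(p:ℝ)*ω),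
            Real.exp (-(k j)*(t+(p:ℝ)*ω-s)) * g j (φ s 0 - φ s j))
          - ∫ s in Set.Iic t, Real.exp (-(k j)*(t-s)) * g j (φ s 0 - φ s j)|
          ≤ (1 + 2*(m:ℝ)*l j/(k j) + 4*(mc j)*Real.exp (4*(k j*ω))
              / (1 - Real.exp (-(k j*ω)))) * ε := hest
      have hDe : D j * ε = (1 + 2*(m:ℝ)*l j/(k j) + 4*(mc j)*Real.exp (4*(k j*ω))
          / (1 - Real.exp (-(k j*ω)))) * ε := by
        rw [hD, hCint]
        dsimp only
        rw [if_neg hj]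
        ring
      rw [hDe]
      exact hest'
  calc eNorm (fun j => Tmap m θ k I₀ g₀ g J₀ φ (t + (p:ℝ)*ω) j - Tmap m θ k I₀ g₀ g J₀ φ t j)
      ≤ ∑ j, |Tmap m θ k I₀ g₀ g J₀ φ (t + (p:ℝ)*ω) j - Tmap m θ k I₀ g₀ g J₀ φ t j| :=
        eNorm_le_sum _
    _ ≤ ∑ j, D j * ε := Finset.sum_le_sum (fun j _ => hcoord j)
    _ = (∑ j, D j) * ε := (Finset.sum_mul _ _ _).symm
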